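/- For every integer n ≥ 3, the determinant of the distance matrix D(T_n) of the graph T_n equals (-1)^{n-1} · 2^{n-2}. -/

import Mathlib

theorem det_distanceMatrix_Tn (n : ℕ) (hn : 3 ≤ n)
    (D : Matrix (Fin n) (Fin n) ℝ)
    (hD : ∀ i j : Fin n, D i j =
      if i = j then 0 else if 2 ≤ i.val ∧ 2 ≤ j.val then 2 else 1) :
    D.det = (-1) ^ (n - 1) * 2 ^ (n - 2) := by
  have hcard1 : ((Finset.range n).filter (fun i => i < 2)).card = 2 := by
    have h : (Finset.range n).filter (fun i => i < 2) = Finset.range 2 := by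
      ext i; simp only [Finset.mem_filter, Finset.mem_range]; omega
    rw [h, Finset.card_range]
  have hcard2 : ((Finset.range n).filter (fun i => ¬ i < 2)).card = n - 2 := by
    have h := Finset.card_filter_add_card_filter_not
      (s := Finset.range n) (p := fun i => i < 2)
    rw [Finset.card_range] at h
    omega
  have key : ∀ a b : ℝ, (∑ j : Fin n, (if j.val < 2 then a else b))
      = 2 * a + (n - 2 : ℕ) * b := by
    intro a b
    rw [Fin.sum_univ_eq_sum_range (fun i => if i < 2 then a else b), Finset.sum_ite,
      Finset.sum_const, Finset.sum_const, hcard1, hcard2, nsmul_eq_mul, nsmul_eq_mul]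
    norm_num
  set d : Fin n → ℝ := fun i => if i.val < 2 then 1 else 2 with hd
  set A : Matrix (Fin n) (Fin 2) ℝ := fun i k =>
    if k = 0 then (if i.val < 2 then (-1 : ℝ) else 0)
    else (if i.val < 2 then 0 else (-1/2)) with hA
  set B : Matrix (Fin 2) (Fin n) ℝ := fun k j =>
    if k = 0 then 1 else (if j.val < 2 then 1 else 2) with hB
  have hfac : D = Matrix.diagonal (fun i => -d i) * (1 + A * B) := by
    ext i j
    rw [Matrix.diagonal_mul, hD]
    rw [Matrix.add_apply, Matrix.mul_apply, Fin.sum_univ_two]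
    simp only [Matrix.add_apply, Matrix.one_apply, Matrix.mul_apply, Fin.sum_univ_two,
      hA, hB, hd]
    by_cases hij : i = j
    · subst hij
      by_cases hi : i.val < 2 <;> simp [hi] <;> norm_num
    · have hij' : ¬ (i = j) := hij
      by_cases hi : i.val < 2 <;> by_cases hj : j.val < 2 <;>
        simp [hij', hi, hj] <;> norm_num <;> omega
  have entry : ∀ (k l : Fin 2) (a b : ℝ),
      (∀ j : Fin n, B k j * A j l = (if j.val < 2 then a else b)) →
      (B * A) k l = 2 * a + (n - 2 : ℕ) * b := by
    intro k l a b he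
    simp only [Matrix.mul_apply]
    rw [Finset.sum_congr rfl fun j _ => he j, key]
  have e00 : ∀ j : Fin n, B 0 j * A j 0 = (if j.val < 2 then (-1:ℝ) else 0) := by
    intro j; simp only [hA, hB]
    by_cases h : j.val < 2 <;> simp [h]
  have e01 : ∀ j : Fin n, B 0 j * A j 1 = (if j.val < 2 then (0:ℝ) else -1/2) := by
    intro j; simp only [hA, hB]
    by_cases h : j.val < 2 <;> simp [h]
  have e10 : ∀ j : Fin n, B 1 j * A j 0 = (if j.val < 2 then (-1:ℝ) else 0) := by
    intro j; simp only [hA, hB]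
    by_cases h : j.val < 2 <;> simp [h]
  have e11 : ∀ j : Fin n, B 1 j * A j 1 = (if j.val < 2 then (0:ℝ) else -1) := by
    intro j; simp only [hA, hB]
    by_cases h : j.val < 2 <;> simp [h] <;> norm_num
  have h00 : (B * A) 0 0 = -2 := by
    rw [entry 0 0 (-1) 0 e00]; norm_num
  have h01 : (B * A) 0 1 = -((n : ℝ) - 2) / 2 := by
    rw [entry 0 1 0 (-1/2) e01]
    push_cast [Nat.cast_sub (by omega : 2 ≤ n)]
    ring
  have h10 : (B * A) 1 0 = -2 := by
    rw [entry 1 0 (-1) 0 e10]; norm_num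
  have h11 : (B * A) 1 1 = -((n : ℝ) - 2) := by
    rw [entry 1 1 0 (-1) e11]
    push_cast [Nat.cast_sub (by omega : 2 ≤ n)]
    ring
  have hdet2 : (1 + B * A).det = -1 := by
    rw [Matrix.det_fin_two]
    simp only [Matrix.add_apply, Matrix.one_apply_eq, Matrix.one_apply_ne (by decide : (0 : Fin 2) ≠ 1),
      Matrix.one_apply_ne (by decide : (1 : Fin 2) ≠ 0), h00, h01, h10, h11]
    have h2n : (2 : ℝ) ≤ (n : ℝ) := by exact_mod_cast by omega
    ring
  have hprod : (∏ i : Fin n, -d i) = (-1 : ℝ) ^ n * 2 ^ (n - 2) := by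
    have : (∏ i : Fin n, -d i) = (∏ i : Fin n, (-1 : ℝ)) * ∏ i : Fin n, d i := by
      rw [← Finset.prod_mul_distrib]
      simp
    rw [this, Finset.prod_const, Finset.card_univ, Fintype.card_fin]
    congr 1
    rw [hd]
    rw [Fin.prod_univ_eq_prod_range (fun i => if i < 2 then (1:ℝ) else 2), Finset.prod_ite,
      Finset.prod_const, Finset.prod_const, hcard1, hcard2]
    norm_num
  rw [hfac, Matrix.det_mul, Matrix.det_one_add_mul_comm, Matrix.det_diagonal, hdet2, hprod]
  obtain ⟨m, rfl⟩ : ∃ m, n = m + 1 := ⟨n - 1, by omega⟩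
  simp only [Nat.add_sub_cancel, pow_succ]
  ring
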